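/- arXiv:0705.3868 — 4 statements merged into one kernel-verified Lean document; each statement's English description precedes it below -/
import Mathlib

section
/- Let $g, l, h > 0$ and $e_3 = (0,0,1) \in \mathbb{R}^3$. Let $q_k, \omega_k \in \mathbb{R}^3$ satisfy $\|q_k\| = 1$ and $\omega_k \cdot q_k = 0$, set $a = h\omega_k + \frac{h^2 g}{2l}\, q_k \times e_3$, assume $\|a\| \le 1$, and define $q_{k+1} = a \times q_k + \sqrt{1 - \|a\|^2}\; q_k$. Then $\|q_{k+1}\| = 1$; that is, the variational integrator on $\S^2$ exactly preserves the unit length of $q_k$. -/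
open Matrix

/-- The cross product on `ℝ³`. -/
noncomputable def cross3 (u v : Fin 3 → ℝ) : Fin 3 → ℝ := crossProduct u v

/-- The Euclidean norm on `ℝ³`, `‖u‖ = √(u ⬝ u)`. -/
noncomputable def enorm3 (u : Fin 3 → ℝ) : ℝ := Real.sqrt (u ⬝ᵥ u)

/-- The gravity direction `e₃ = (0,0,1)`. -/
def e3 : Fin 3 → ℝ := ![0, 0, 1]

/-- The discrete position update of the variational integrator for the spherical
pendulum, `q_{k+1} = a × q_k + √(1 - ‖a‖²) q_k` with
`a = h ω_k + (h²g/2l) q_k × e₃`, exactly preserves the unit length of `q_k`. -/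
theorem spherical_pendulum_integrator_preserves_unit_length
    (g l h : ℝ) (hg : 0 < g) (hl : 0 < l) (hh : 0 < h)
    (qk ωk : Fin 3 → ℝ) (hq : enorm3 qk = 1) (hqω : ωk ⬝ᵥ qk = 0)
    (a : Fin 3 → ℝ) (ha : a = h • ωk + (h ^ 2 * g / (2 * l)) • cross3 qk e3)
    (hle : enorm3 a ≤ 1) :
    enorm3 (cross3 a qk + Real.sqrt (1 - enorm3 a ^ 2) • qk) = 1 := by
  have hc : ∀ u v : Fin 3 → ℝ, cross3 u v =
      ![u 1 * v 2 - u 2 * v 1, u 2 * v 0 - u 0 * v 2, u 0 * v 1 - u 1 * v 0] := by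
    intro u v
    simp [cross3, cross_apply]
  have hqq : qk ⬝ᵥ qk = 1 := by
    have h0 : (0:ℝ) ≤ qk ⬝ᵥ qk := by
      simp only [dotProduct, Fin.sum_univ_three]
      have := mul_self_nonneg (qk 0); have := mul_self_nonneg (qk 1)
      have := mul_self_nonneg (qk 2); linarith
    have := hq
    unfold enorm3 at this
    nlinarith [Real.sq_sqrt h0, this]
  have haq : a ⬝ᵥ qk = 0 := by
    subst ha
    simp only [dotProduct, hc, Fin.sum_univ_three, Pi.add_apply, Pi.smul_apply,
      smul_eq_mul, e3, cons_val_zero, cons_val_one, head_cons, cons_val_two,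
      tail_cons] at hqω ⊢
    linear_combination h * hqω
  have ha0 : (0:ℝ) ≤ a ⬝ᵥ a := by
    simp only [dotProduct, Fin.sum_univ_three]
    have := mul_self_nonneg (a 0); have := mul_self_nonneg (a 1)
    have := mul_self_nonneg (a 2); linarith
  have haa : enorm3 a ^ 2 = a ⬝ᵥ a := Real.sq_sqrt ha0
  have haa1 : a ⬝ᵥ a ≤ 1 := by
    unfold enorm3 at hle
    nlinarith [Real.sqrt_nonneg (a ⬝ᵥ a), Real.sq_sqrt ha0]
  set s := Real.sqrt (1 - enorm3 a ^ 2) with hs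
  have hs2 : s ^ 2 = 1 - a ⬝ᵥ a := by
    rw [hs, Real.sq_sqrt (by rw [haa]; linarith), haa]
  unfold enorm3
  rw [show (cross3 a qk + s • qk) ⬝ᵥ (cross3 a qk + s • qk) = 1 from ?_, Real.sqrt_one]
  simp only [dotProduct, hc, Fin.sum_univ_three, Pi.add_apply, Pi.smul_apply,
    smul_eq_mul, cons_val_zero, cons_val_one, head_cons, cons_val_two, tail_cons] at haq hqq hs2 ⊢
  nlinarith [hs2, hqq, haq, sq_nonneg (a 0 + a 1 + a 2)]
end

section
/- Let $g, l, h > 0$ and $e_3 = (0,0,1) \in \mathbb{R}^3$. Let $q_k, \omega_k \in \mathbb{R}^3$ satisfy $\|q_k\| = 1$ and $\omega_k \cdot q_k = 0$, set $a = h\omega_k + \frac{h^2 g}{2l}\, q_k \times e_3$, assume $\|a\| \le 1$, and define $q_{k+1} = a \times q_k + \sqrt{1 - \|a\|^2}\; q_k$ and $\omega_{k+1} = \omega_k + \frac{hg}{2l}\, q_k \times e_3 + \frac{hg}{2l}\, q_{k+1} \times e_3$. Then $q_{k+1} \cdot \omega_{k+1} = 0$; that is, the variational integrator on $\S^2$ exactly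 preserves the orthogonality constraint between position and angular velocity. -/
open Matrix

/-- The variational integrator for the spherical pendulum, with updates
`q_{k+1} = a × q_k + √(1 - ‖a‖²) q_k` (`a = h ω_k + (h²g/2l) q_k × e₃`) and
`ω_{k+1} = ω_k + (hg/2l) q_k × e₃ + (hg/2l) q_{k+1} × e₃`, exactly preserves
the orthogonality constraint: `q_{k+1} · ω_{k+1} = 0`. -/
theorem spherical_pendulum_integrator_preserves_orthogonality
    (g l h : ℝ) (hg : 0 < g) (hl : 0 < l) (hh : 0 < h)
    (qk ωk : Fin 3 → ℝ) (hq : enorm3 qk = 1) (hqω : ωk ⬝ᵥ qk = 0)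
    (a : Fin 3 → ℝ) (ha : a = h • ωk + (h ^ 2 * g / (2 * l)) • cross3 qk e3)
    (hle : enorm3 a ≤ 1)
    (qk1 : Fin 3 → ℝ) (hqk1 : qk1 = cross3 a qk + Real.sqrt (1 - enorm3 a ^ 2) • qk)
    (ωk1 : Fin 3 → ℝ)
    (hωk1 : ωk1 = ωk + (h * g / (2 * l)) • cross3 qk e3 + (h * g / (2 * l)) • cross3 qk1 e3) :
    qk1 ⬝ᵥ ωk1 = 0 := by
  -- `qk ⬝ᵥ a = 0`
  have hqa : qk ⬝ᵥ a = 0 := by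
    rw [ha, dotProduct_add, dotProduct_smul, dotProduct_smul]
    have h1 : qk ⬝ᵥ ωk = 0 := by rw [dotProduct_comm]; exact hqω
    have h2 : qk ⬝ᵥ cross3 qk e3 = 0 := dot_self_cross qk e3
    rw [h1, h2]; simp
  -- `qk1 ⬝ᵥ a = 0`
  have hq1a : qk1 ⬝ᵥ a = 0 := by
    rw [hqk1, add_dotProduct, smul_dotProduct]
    have h1 : cross3 a qk ⬝ᵥ a = 0 := by
      rw [dotProduct_comm]; exact dot_self_cross a qk
    rw [h1, hqa]; simp
  -- rewrite `ωk1` in terms of `a`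
  have hω' : ωk1 = h⁻¹ • a + (h * g / (2 * l)) • cross3 qk1 e3 := by
    rw [hωk1, ha]
    ext i
    simp only [Pi.add_apply, Pi.smul_apply, smul_eq_mul]
    field_simp
  rw [hω', dotProduct_add, dotProduct_smul, dotProduct_smul, hq1a,
    show qk1 ⬝ᵥ cross3 qk1 e3 = 0 from dot_self_cross qk1 e3]
  simp
end

section
/- Let $\alpha, \gamma, \kappa \in \mathbb{R}$, $h > 0$, and let $\beta, V : \mathbb{R} \to \mathbb{R}$ be continuously differentiable. Define the discrete Lagrangian $L_d(q_k, q_{k+1}) = h\,\big[\frac{1}{2}\big(\alpha(\Delta\theta_k/h)^2 + 2\beta(\theta_{k+1/2})(\Delta\theta_k/h)(\Delta s_k/h) + \gamma(\Delta s_k/h)^2\big) - V(\theta_{k+1/2})\big]$ with $q_k = (\theta_k, s_k)$, $\theta_{k+1/2} = (\theta_k+\theta_{k+1})/2$, $\Delta\theta_k = \theta_{k+1}-\theta_k$, $\Delta s_k = s_{k+1}-s_k$, and set $\tau = \kappa\beta$ and $u_k = -\frac{\gamma\,\Delta\theta_k\, \tau(\theta_{k+1/2}) - \gamma\,\Delta\theta_{k-1}\,\tau(\theta_{k-1/2})}{h}$.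 Then for any sequence $(q_k)$, the forced discrete equation $\frac{\partial L_d(q_k, q_{k+1})}{\partial s_k} + \frac{\partial L_d(q_{k-1}, q_k)}{\partial s_k} = -u_k$ holds if and only if the discrete controlled momentum $p_k = \frac{(1+\gamma\kappa)\beta(\theta_{k+1/2})\Delta\theta_k + \gamma\Delta s_k}{h}$ satisfies $p_k = p_{k-1}$. -/
/-- The cart-pendulum Lagrangian `L(θ, θ̇, ṡ) = ½[αθ̇² + 2β(θ)θ̇ṡ + γṡ²] - V(θ)`. -/
noncomputable def Lcp (α γ : ℝ) (β V : ℝ → ℝ) (θ θd sd : ℝ) : ℝ :=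
  1 / 2 * (α * θd ^ 2 + 2 * β θ * θd * sd + γ * sd ^ 2) - V θ

/-- The second-order accurate discrete Lagrangian
`L_d(q_k, q_{k+1}) = h L(θ_{k+1/2}, Δθ_k/h, Δs_k/h)`, where `q = (θ, s)`. -/
noncomputable def Ldcp (α γ h : ℝ) (β V : ℝ → ℝ) (qk qk1 : ℝ × ℝ) : ℝ :=
  h * Lcp α γ β V ((qk.1 + qk1.1) / 2) ((qk1.1 - qk.1) / h) ((qk1.2 - qk.2) / h)

lemma hder1 (a b c e h d x : ℝ) :
    HasDerivAt (fun x => h * (1/2 * (a + b * ((d - x)/h) + c * ((d - x)/h)^2) - e))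
      (h * (1/2 * (b * (-1/h) + c * (2 * ((d - x)/h) * (-1/h))))) x := by
  have h1 : HasDerivAt (fun x : ℝ => (d - x)/h) (-1/h) x := by
    simpa using ((hasDerivAt_id x).const_sub d).div_const h
  have h2 := (((h1.const_mul b).const_add a).add ((h1.pow 2).const_mul c))
  have h3 := ((h2.const_mul (1/2 : ℝ)).sub_const e).const_mul h
  exact h3.congr_deriv (by norm_num)

lemma hder2 (a b c e h d : ℝ) (x : ℝ) :
    HasDerivAt (fun x => h * (1/2 * (a + b * ((x - d)/h) + c * ((x - d)/h)^2) - e))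
      (h * (1/2 * (b * (1/h) + c * (2 * ((x - d)/h) * (1/h))))) x := by
  have h1 : HasDerivAt (fun x : ℝ => (x - d)/h) (1/h) x := by
    simpa using ((hasDerivAt_id x).sub_const d).div_const h
  have h2 := (((h1.const_mul b).const_add a).add ((h1.pow 2).const_mul c))
  have h3 := ((h2.const_mul (1/2 : ℝ)).sub_const e).const_mul h
  exact h3.congr_deriv (by norm_num)

/-- With the discrete kinetic-shaping feedback
`u_k = -(γ Δθ_k τ(θ_{k+1/2}) - γ Δθ_{k-1} τ(θ_{k-1/2}))/h`, `τ = κβ`, the forced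
discrete `s`-equation `∂L_d(q_k,q_{k+1})/∂s_k + ∂L_d(q_{k-1},q_k)/∂s_k = -u_k`
holds if and only if the discrete controlled momentum
`p_k = ((1+γκ)β(θ_{k+1/2})Δθ_k + γΔs_k)/h` satisfies `p_k = p_{k-1}`. -/
theorem discrete_kinetic_shaping_momentum_conservation
    (α γ κ h : ℝ) (hh : 0 < h)
    (β V : ℝ → ℝ) (hβ : ContDiff ℝ 1 β) (hV : ContDiff ℝ 1 V) :
    ∀ q : ℕ → ℝ × ℝ, ∀ k : ℕ, 1 ≤ k →
      (deriv (fun x => Ldcp α γ h β V ((q k).1, x) (q (k + 1))) (q k).2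
          + deriv (fun y => Ldcp α γ h β V (q (k - 1)) ((q k).1, y)) (q k).2
        = -(-(γ * ((q (k + 1)).1 - (q k).1) * (κ * β (((q k).1 + (q (k + 1)).1) / 2))
              - γ * ((q k).1 - (q (k - 1)).1) * (κ * β (((q (k - 1)).1 + (q k).1) / 2))) / h)
      ↔ ((1 + γ * κ) * β (((q k).1 + (q (k + 1)).1) / 2) * ((q (k + 1)).1 - (q k).1)
            + γ * ((q (k + 1)).2 - (q k).2)) / h
          = ((1 + γ * κ) * β (((q (k - 1)).1 + (q k).1) / 2) * ((q k).1 - (q (k - 1)).1)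
            + γ * ((q k).2 - (q (k - 1)).2)) / h) := by
  intro q k hk
  have hne : h ≠ 0 := ne_of_gt hh
  set θ0 := (q (k - 1)).1
  set θ1 := (q k).1
  set θ2 := (q (k + 1)).1
  set s0 := (q (k - 1)).2
  set s1 := (q k).2
  set s2 := (q (k + 1)).2
  set B1 := β ((θ1 + θ2) / 2)
  set B0 := β ((θ0 + θ1) / 2)
  have D1 : deriv (fun x => Ldcp α γ h β V ((q k).1, x) (q (k + 1))) (q k).2
      = -(B1 * (θ2 - θ1) + γ * (s2 - s1)) / h := by
    have heq : (fun x => Ldcp α γ h β V ((q k).1, x) (q (k + 1)))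
        = fun x => h * (1/2 * (α * ((θ2 - θ1)/h)^2
            + (2 * B1 * ((θ2 - θ1)/h)) * ((s2 - x)/h)
            + γ * ((s2 - x)/h)^2) - V ((θ1 + θ2) / 2)) := by
      funext x
      simp only [Ldcp, Lcp]
      rfl
    rw [heq, (hder1 (α * ((θ2 - θ1)/h)^2) (2 * B1 * ((θ2 - θ1)/h)) γ
        (V ((θ1 + θ2) / 2)) h s2 s1).deriv]
    field_simp
    all_goals ring
  have D2 : deriv (fun y => Ldcp α γ h β V (q (k - 1)) ((q k).1, y)) (q k).2
      = (B0 * (θ1 - θ0) + γ * (s1 - s0)) / h := by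
    have heq : (fun y => Ldcp α γ h β V (q (k - 1)) ((q k).1, y))
        = fun y => h * (1/2 * (α * ((θ1 - θ0)/h)^2
            + (2 * B0 * ((θ1 - θ0)/h)) * ((y - s0)/h)
            + γ * ((y - s0)/h)^2) - V ((θ0 + θ1) / 2)) := by
      funext y
      simp only [Ldcp, Lcp]
      rfl
    rw [heq, (hder2 (α * ((θ1 - θ0)/h)^2) (2 * B0 * ((θ1 - θ0)/h)) γ
        (V ((θ0 + θ1) / 2)) h s0 s1).deriv]
    field_simp
    all_goals ring
  rw [D1, D2]
  rw [← add_div, ← neg_div, neg_neg, div_eq_div_iff hne hne,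
    div_eq_div_iff hne hne]
  constructor <;> intro H <;> linear_combination -H
end

section
/- Let $n \ge 1$, let $L_d : \mathbb{R}^n \times \mathbb{R}^n \to \mathbb{R}$ be continuously differentiable, and let $v \in \mathbb{R}^n$ be such that $L_d(q + c v, q' + c v) = L_d(q, q')$ for all $q, q' \in \mathbb{R}^n$ and all $c \in \mathbb{R}$ (translation invariance in the direction $v$). If a sequence $(q_k)_{k=0}^N$ satisfies the discrete Euler--Lagrange equations $D_2 L_d(q_{k-1}, q_k) + D_1 L_d(q_k, q_{k+1}) = 0$ for $k = 1, \dots, N-1$, then the discrete momentum $J_k := D_2 L_d(q_{k-1}, q_k) \cdot v$ is constant in $k$ for $k = 1, \dots, N$; that is, the variational integrator preserves the momentum map associated with the translational symmetry (discrete Noether's theorem). -/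
/-- `D1 L a b` is the partial derivative of `L : ℝⁿ × ℝⁿ → ℝ` with respect to its
first argument, evaluated at `(a, b)`. -/
noncomputable def D1 {n : ℕ} (L : (Fin n → ℝ) × (Fin n → ℝ) → ℝ) (a b : Fin n → ℝ) :
    (Fin n → ℝ) →L[ℝ] ℝ :=
  fderiv ℝ (fun x => L (x, b)) a

/-- `D2 L a b` is the partial derivative of `L : ℝⁿ × ℝⁿ → ℝ` with respect to its
second argument, evaluated at `(a, b)`. -/
noncomputable def D2 {n : ℕ} (L : (Fin n → ℝ) × (Fin n → ℝ) → ℝ) (a b : Fin n → ℝ) :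
    (Fin n → ℝ) →L[ℝ] ℝ :=
  fderiv ℝ (fun y => L (a, y)) b

theorem noether_key {n : ℕ} (Ld : (Fin n → ℝ) × (Fin n → ℝ) → ℝ) (hLd : ContDiff ℝ 1 Ld)
    (v : Fin n → ℝ)
    (hinv : ∀ (a b : Fin n → ℝ) (c : ℝ), Ld (a + c • v, b + c • v) = Ld (a, b))
    (a b : Fin n → ℝ) : D1 Ld a b v + D2 Ld a b v = 0 := by
  have hdiff : DifferentiableAt ℝ Ld (a, b) := (hLd.differentiable one_ne_zero) (a, b)
  set F := fderiv ℝ Ld (a, b) with hF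
  -- partial derivatives
  have h1 : HasFDerivAt (fun x => Ld (x, b)) (F.comp ((ContinuousLinearMap.id ℝ _).prod 0)) a := by
    exact hdiff.hasFDerivAt.comp a (HasFDerivAt.prodMk (hasFDerivAt_id a) (hasFDerivAt_const b a))
  have h2 : HasFDerivAt (fun y => Ld (a, y)) (F.comp ((0 : (Fin n → ℝ) →L[ℝ] (Fin n → ℝ)).prod (ContinuousLinearMap.id ℝ _))) b := by
    exact hdiff.hasFDerivAt.comp b (HasFDerivAt.prodMk (hasFDerivAt_const a b) (hasFDerivAt_id b))
  have e1 : D1 Ld a b v = F (v, 0) := by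
    rw [D1, h1.fderiv]; rfl
  have e2 : D2 Ld a b v = F (0, v) := by
    rw [D2, h2.fderiv]; rfl
  -- total derivative along c ↦ (a + c•v, b + c•v)
  have hc : HasDerivAt (fun c : ℝ => (a + c • v, b + c • v)) (v, v) 0 := by
    have := ((hasDerivAt_id (0:ℝ)).smul_const v).const_add a
    have := HasDerivAt.prodMk this (((hasDerivAt_id (0:ℝ)).smul_const v).const_add b)
    simpa using this
  have hg : HasDerivAt (fun c : ℝ => Ld (a + c • v, b + c • v)) (F (v, v)) 0 := by
    have h' : HasFDerivAt Ld F (a + (0:ℝ) • v, b + (0:ℝ) • v) := by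
      simpa using hdiff.hasFDerivAt
    exact h'.comp_hasDerivAt 0 hc
  have hg0 : HasDerivAt (fun _ : ℝ => Ld (a, b)) (0:ℝ) 0 := hasDerivAt_const 0 _
  have hgg : (fun c : ℝ => Ld (a + c • v, b + c • v)) = fun _ => Ld (a, b) := by
    funext c; exact hinv a b c
  rw [hgg] at hg
  have : F (v, v) = 0 := hg.unique hg0
  rw [e1, e2, ← F.map_add]
  simpa using this

/-- Discrete Noether's theorem for a translational symmetry: if the discrete
Lagrangian is invariant under translations in the direction `v` and the sequence
`(q_k)` satisfies the discrete Euler–Lagrange equations, then the discrete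
momentum `J_k = D₂L_d(q_{k-1}, q_k) ⋅ v` is constant in `k` for `k = 1, …, N`. -/
theorem discrete_noether_translation
    (n N : ℕ) (hn : 1 ≤ n)
    (Ld : (Fin n → ℝ) × (Fin n → ℝ) → ℝ) (hLd : ContDiff ℝ 1 Ld)
    (v : Fin n → ℝ)
    (hinv : ∀ (a b : Fin n → ℝ) (c : ℝ), Ld (a + c • v, b + c • v) = Ld (a, b))
    (q : ℕ → (Fin n → ℝ))
    (hDEL : ∀ k, 1 ≤ k → k ≤ N - 1 →
      D2 Ld (q (k - 1)) (q k) + D1 Ld (q k) (q (k + 1)) = 0) :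
    ∀ k, 1 ≤ k → k ≤ N →
      D2 Ld (q (k - 1)) (q k) v = D2 Ld (q 0) (q 1) v := by
  intro k
  induction k with
  | zero => omega
  | succ k ih =>
    intro _ hkN
    rcases Nat.eq_zero_or_pos k with rfl | hk
    · simp
    · have hkN' : k ≤ N - 1 := by omega
      have hdel := hDEL k hk hkN'
      have happ : D2 Ld (q (k - 1)) (q k) v + D1 Ld (q k) (q (k + 1)) v = 0 := by
        have := congrArg (fun (f : (Fin n → ℝ) →L[ℝ] ℝ) => f v) hdel
        simpa using this
      have hkey := noether_key Ld hLd v hinv (q k) (q (k + 1))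
      have e : D2 Ld (q (k + 1 - 1)) (q (k + 1)) v = D2 Ld (q (k - 1)) (q k) v := by
        simp only [Nat.add_sub_cancel]
        linarith
      rw [e]
      exact ih hk (by omega)
end
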